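/- Let a, b, c, d be real numbers with a < b and c < d, and let f : [a,b] × [c,d] → ℝ satisfy: (1) for each fixed y₀ ∈ [c,d], the function x ↦ f(x,y₀) is continuous on [a,b] and differentiable on (a,b); (2) for each fixed x₀ ∈ (a,b), the function y ↦ f_x(x₀,y) (the partial derivative of f with respect to the first variable) is continuous on [c,d] and differentiable on (c,d); (3) f(a,c) + f(b,d) = f(a,d) + f(b,c). Then there exists (x₀,y₀) ∈ (a,b) × (c,d) such that the mixed partial derivative f_{xy}(x₀,y₀) = 0. -/

import Mathlib

/-- Rectangular Rolle's Theorem for functions of two variables. -/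
theorem rectangular_rolle (a b c d : ℝ) (hab : a < b) (hcd : c < d)
    (f : ℝ → ℝ → ℝ)
    (h1 : ∀ y₀ ∈ Set.Icc c d,
      ContinuousOn (fun x => f x y₀) (Set.Icc a b) ∧
      DifferentiableOn ℝ (fun x => f x y₀) (Set.Ioo a b))
    (h2 : ∀ x₀ ∈ Set.Ioo a b,
      ContinuousOn (fun y => deriv (fun x => f x y) x₀) (Set.Icc c d) ∧
      DifferentiableOn ℝ (fun y => deriv (fun x => f x y) x₀) (Set.Ioo c d))
    (h3 : f a c + f b d = f a d + f b c) :
    ∃ x₀ ∈ Set.Ioo a b, ∃ y₀ ∈ Set.Ioo c d,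
      deriv (fun y => deriv (fun x => f x y) x₀) y₀ = 0 := by
  have hc : c ∈ Set.Icc c d := Set.left_mem_Icc.2 hcd.le
  have hd : d ∈ Set.Icc c d := Set.right_mem_Icc.2 hcd.le
  set g : ℝ → ℝ := fun x => f x d - f x c with hg
  have hgcont : ContinuousOn g (Set.Icc a b) := (h1 d hd).1.sub (h1 c hc).1
  have hgdiff : DifferentiableOn ℝ g (Set.Ioo a b) := (h1 d hd).2.sub (h1 c hc).2
  have hgab : g a = g b := by simp only [hg]; linarith
  obtain ⟨x₀, hx₀, hgx⟩ := exists_deriv_eq_zero hab hgcont hgab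
  have hdd : DifferentiableAt ℝ (fun x => f x d) x₀ :=
    ((h1 d hd).2 x₀ hx₀).differentiableAt (Ioo_mem_nhds hx₀.1 hx₀.2)
  have hdc : DifferentiableAt ℝ (fun x => f x c) x₀ :=
    ((h1 c hc).2 x₀ hx₀).differentiableAt (Ioo_mem_nhds hx₀.1 hx₀.2)
  have hgx' : deriv (fun x => f x d) x₀ = deriv (fun x => f x c) x₀ := by
    have := deriv_fun_sub hdd hdc
    simp only [hg] at hgx
    rw [this] at hgx
    linarith
  set h : ℝ → ℝ := fun y => deriv (fun x => f x y) x₀ with hh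
  have hhcd : h c = h d := hgx'.symm
  obtain ⟨y₀, hy₀, hhy⟩ := exists_deriv_eq_zero hcd (h2 x₀ hx₀).1 hhcd
  exact ⟨x₀, hx₀, y₀, hy₀, hhy⟩
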